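/- The bivariate Shepard–Bernoulli operator interpolates at every node: for each k ∈ {1,…,N}, lim_{x→V_k, x∉{V_1,…,V_N}} S_{B_m}[f](x) = f(V_k), provided f is m times continuously differentiable on a neighborhood of D. -/

import Mathlib

open Filter Finset
open scoped BigOperators Topology

noncomputable section

abbrev E2 : Type := EuclideanSpace ℝ (Fin 2)

def e0 : E2 := EuclideanSpace.single 0 1
def e1 : E2 := EuclideanSpace.single 1 1

/-- Directional derivative of `f` along `v`. -/
def Dv (v : E2) (f : E2 → ℝ) : E2 → ℝ := fun x => fderiv ℝ f x v

/-- Iterated mixed directional derivative `D_u^a D_v^b f`. -/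
def DD (u v : E2) (a b : ℕ) (f : E2 → ℝ) : E2 → ℝ := (Dv u)^[a] ((Dv v)^[b] f)

/-- Partial derivative `∂^{a+b} f / ∂x^a ∂y^b`. -/
def pd (a b : ℕ) (f : E2 → ℝ) : E2 → ℝ := DD e0 e1 a b f

/-- Twice the signed area determinant. -/
def detA (P Q R : E2) : ℝ := (Q 0 - P 0) * (R 1 - P 1) - (R 0 - P 0) * (Q 1 - P 1)

def lam1 (V1 V2 V3 x : E2) : ℝ := detA x V2 V3 / detA V1 V2 V3
def lam2 (V1 V2 V3 x : E2) : ℝ := detA V1 x V3 / detA V1 V2 V3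
def lam3 (V1 V2 V3 x : E2) : ℝ := detA V1 V2 x / detA V1 V2 V3

def rmax (V1 V2 V3 : E2) : ℝ := max (max ‖V1 - V2‖ ‖V1 - V3‖) ‖V2 - V3‖

/-- `S_n(t) = B_n(t) - B_n(0)`. -/
def Sber (n : ℕ) (t : ℝ) : ℝ :=
  Polynomial.aeval t (Polynomial.bernoulli n) - Polynomial.aeval (0 : ℝ) (Polynomial.bernoulli n)

/-- The generalized Taylor polynomial on the triangle `V1 V2 V3` with respect to `V1`. -/
def Pgen (V1 V2 V3 : E2) (m : ℕ) (f : E2 → ℝ) (x : E2) : ℝ :=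
  f V1
  + ∑ j ∈ Finset.Icc 1 m,
      (DD (V2 - V1) (V3 - V1) 0 (j - 1) f V3 - DD (V2 - V1) (V3 - V1) 0 (j - 1) f V1)
        * Sber j (lam2 V1 V2 V3 x + lam3 V1 V2 V3 x) / (Nat.factorial j)
  + ∑ i ∈ Finset.Icc 1 m, ∑ j ∈ Finset.Icc 1 (m - i + 1),
      ((-1 : ℝ) ^ (i + j) *
          (DD (V1 - V2) (V3 - V2) (j - 1) (i - 1) f V2
            - DD (V1 - V2) (V3 - V2) (j - 1) (i - 1) f V1)
        + (-1 : ℝ) ^ j *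
          (DD (V1 - V3) (V2 - V3) (j - 1) (i - 1) f V3
            - DD (V1 - V3) (V2 - V3) (j - 1) (i - 1) f V1))
      * ((lam2 V1 V2 V3 x + lam3 V1 V2 V3 x) ^ (i - 1)
          * Sber i (lam2 V1 V2 V3 x / (lam2 V1 V2 V3 x + lam3 V1 V2 V3 x))
          / (Nat.factorial i))
      * (Sber j (lam2 V1 V2 V3 x + lam3 V1 V2 V3 x) / (Nat.factorial j))

/-- The Taylor polynomial of order `m` of `f` at `V`. -/
def Tpoly (m : ℕ) (f : E2 → ℝ) (V x : E2) : ℝ :=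
  ∑ a ∈ Finset.range (m + 1), ∑ b ∈ Finset.range (m + 1 - a),
    pd a b f V / (Nat.factorial a * Nat.factorial b) * (x 0 - V 0) ^ a * (x 1 - V 1) ^ b


/-! ### Auxiliary lemmas for the interpolation proof -/

section Aux

open Polynomial

lemma bern_deg (n : ℕ) : (Polynomial.bernoulli n).natDegree ≤ n := by
  unfold Polynomial.bernoulli
  apply Polynomial.natDegree_sum_le_of_forall_le
  intro i hi
  exact (Polynomial.natDegree_monomial_le _).trans (Nat.sub_le n i)

def sPoly (n : ℕ) : Polynomial ℝ :=
  (Polynomial.bernoulli n).map (algebraMap ℚ ℝ)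
    - Polynomial.C (((Polynomial.bernoulli n).map (algebraMap ℚ ℝ)).eval 0)

lemma Sber_eq (n : ℕ) (t : ℝ) : Sber n t = (sPoly n).eval t := by
  rw [Sber, sPoly, Polynomial.eval_sub, Polynomial.eval_C, Polynomial.eval_map,
    Polynomial.eval_map, Polynomial.aeval_def, Polynomial.aeval_def]

lemma Sber_zero (n : ℕ) : Sber n 0 = 0 := by simp [Sber]

lemma cont_Sber (n : ℕ) : Continuous (Sber n) := by
  have : Sber n = fun t => (sPoly n).eval t := funext (Sber_eq n)
  rw [this]
  exact (sPoly n).continuous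

lemma sPoly_eval_zero (n : ℕ) : (sPoly n).eval 0 = 0 := by simp [sPoly]

lemma sPoly_deg (n : ℕ) : (sPoly n).natDegree ≤ n := by
  refine (Polynomial.natDegree_sub_le _ _).trans ?_
  simp only [Polynomial.natDegree_C, max_le_iff]
  exact ⟨natDegree_map_le.trans (bern_deg n), Nat.zero_le n⟩

lemma exists_q (n : ℕ) : ∃ q : Polynomial ℝ, ∀ t, Sber n t = t * q.eval t := by
  obtain ⟨q, hq⟩ : Polynomial.X ∣ sPoly n := by
    rw [Polynomial.X_dvd_iff, Polynomial.coeff_zero_eq_eval_zero]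
    exact sPoly_eval_zero n
  exact ⟨q, fun t => by rw [Sber_eq, hq]; simp⟩

def Gfun (p : Polynomial ℝ) (i : ℕ) (l s : ℝ) : ℝ :=
  ∑ r ∈ Finset.range (i + 1), p.coeff r * l ^ r * s ^ (i - r)

lemma Gfun_eq (p : Polynomial ℝ) (i : ℕ) (hdeg : p.natDegree ≤ i) (l s : ℝ) (hs : s ≠ 0) :
    s ^ i * p.eval (l / s) = Gfun p i l s := by
  rw [Polynomial.eval_eq_sum_range' (lt_of_le_of_lt hdeg (Nat.lt_succ_self i)), Finset.mul_sum,
    Gfun]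
  refine Finset.sum_congr rfl fun r hr => ?_
  rw [Finset.mem_range, Nat.lt_succ_iff] at hr
  rw [div_pow, ← Nat.sub_add_cancel hr, pow_add]
  field_simp
  rw [Nat.add_sub_cancel]
  ring

lemma Gfun_zero (p : Polynomial ℝ) (i : ℕ) (hi : 1 ≤ i) : Gfun p i 0 0 = 0 := by
  refine Finset.sum_eq_zero fun r hr => ?_
  rcases Nat.eq_zero_or_pos r with h | h
  · subst h; rw [zero_pow (by omega : i - 0 ≠ 0)]; ring
  · simp [zero_pow (by omega : r ≠ 0)]

lemma cont_coord (i : Fin 2) : Continuous fun x : E2 => x i := (EuclideanSpace.proj i).continuous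

lemma cont_lam2 (V1 V2 V3 : E2) : Continuous (lam2 V1 V2 V3) := by
  unfold lam2 detA
  exact (((((cont_coord 0).sub continuous_const).mul continuous_const).sub
    (continuous_const.mul ((cont_coord 1).sub continuous_const)))).div_const _

lemma cont_lam3 (V1 V2 V3 : E2) : Continuous (lam3 V1 V2 V3) := by
  unfold lam3 detA
  exact ((continuous_const.mul ((cont_coord 1).sub continuous_const)).sub
    (((cont_coord 0).sub continuous_const).mul continuous_const)).div_const _

lemma lam2_self (V1 V2 V3 : E2) : lam2 V1 V2 V3 V1 = 0 := by simp [lam2, detA]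
lemma lam3_self (V1 V2 V3 : E2) : lam3 V1 V2 V3 V1 = 0 := by simp [lam3, detA]

lemma cont_Gfun (p : Polynomial ℝ) (i : ℕ) {l s : E2 → ℝ} (hl : Continuous l)
    (hs : Continuous s) : Continuous fun x => Gfun p i (l x) (s x) := by
  unfold Gfun
  exact continuous_finset_sum _ fun r _ => ((continuous_const.mul (hl.pow r)).mul (hs.pow _))

lemma Pgen_master (V1 V2 V3 : E2) (m : ℕ) (f : E2 → ℝ) :
    ∃ A Φ : E2 → ℝ, Continuous A ∧ Continuous Φ ∧
      (∀ x, |Pgen V1 V2 V3 m f x - A x| ≤ Φ x) ∧ A V1 = f V1 ∧ Φ V1 = 0 := by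
  choose q hq using exists_q
  refine ⟨fun x => f V1 + ∑ j ∈ Finset.Icc 1 m,
      (DD (V2 - V1) (V3 - V1) 0 (j - 1) f V3 - DD (V2 - V1) (V3 - V1) 0 (j - 1) f V1)
        * Sber j (lam2 V1 V2 V3 x + lam3 V1 V2 V3 x) / (Nat.factorial j),
    fun x => ∑ i ∈ Finset.Icc 1 m, ∑ j ∈ Finset.Icc 1 (m - i + 1),
      |((-1 : ℝ) ^ (i + j) *
          (DD (V1 - V2) (V3 - V2) (j - 1) (i - 1) f V2
            - DD (V1 - V2) (V3 - V2) (j - 1) (i - 1) f V1)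
        + (-1 : ℝ) ^ j *
          (DD (V1 - V3) (V2 - V3) (j - 1) (i - 1) f V3
            - DD (V1 - V3) (V2 - V3) (j - 1) (i - 1) f V1))| *
      (|Gfun (sPoly i) i (lam2 V1 V2 V3 x) (lam2 V1 V2 V3 x + lam3 V1 V2 V3 x)| *
        |(q j).eval (lam2 V1 V2 V3 x + lam3 V1 V2 V3 x)|)
      / ((Nat.factorial i : ℝ) * (Nat.factorial j : ℝ)), ?_, ?_, ?_, ?_, ?_⟩
  · exact continuous_const.add (continuous_finset_sum _ fun j _ =>
      ((continuous_const.mul ((cont_Sber j).comp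
        ((cont_lam2 V1 V2 V3).add (cont_lam3 V1 V2 V3)))).div_const _))
  · refine continuous_finset_sum _ fun i _ => continuous_finset_sum _ fun j _ => ?_
    refine Continuous.div_const ?_ _
    refine continuous_const.mul (Continuous.mul ?_ ?_)
    · exact (cont_Gfun (sPoly i) i (cont_lam2 V1 V2 V3)
        ((cont_lam2 V1 V2 V3).add (cont_lam3 V1 V2 V3))).abs
    · exact ((q j).continuous.comp
        ((cont_lam2 V1 V2 V3).add (cont_lam3 V1 V2 V3))).abs
  · intro x
    have hd : Pgen V1 V2 V3 m f x - (f V1 + ∑ j ∈ Finset.Icc 1 m,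
        (DD (V2 - V1) (V3 - V1) 0 (j - 1) f V3 - DD (V2 - V1) (V3 - V1) 0 (j - 1) f V1)
          * Sber j (lam2 V1 V2 V3 x + lam3 V1 V2 V3 x) / (Nat.factorial j)) =
        ∑ i ∈ Finset.Icc 1 m, ∑ j ∈ Finset.Icc 1 (m - i + 1),
          ((-1 : ℝ) ^ (i + j) *
              (DD (V1 - V2) (V3 - V2) (j - 1) (i - 1) f V2
                - DD (V1 - V2) (V3 - V2) (j - 1) (i - 1) f V1)
            + (-1 : ℝ) ^ j *
              (DD (V1 - V3) (V2 - V3) (j - 1) (i - 1) f V3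
                - DD (V1 - V3) (V2 - V3) (j - 1) (i - 1) f V1))
          * ((lam2 V1 V2 V3 x + lam3 V1 V2 V3 x) ^ (i - 1)
              * Sber i (lam2 V1 V2 V3 x / (lam2 V1 V2 V3 x + lam3 V1 V2 V3 x))
              / (Nat.factorial i))
          * (Sber j (lam2 V1 V2 V3 x + lam3 V1 V2 V3 x) / (Nat.factorial j)) := by
      rw [Pgen]; ring
    rw [hd]
    refine (Finset.abs_sum_le_sum_abs _ _).trans (Finset.sum_le_sum fun i hi => ?_)
    refine (Finset.abs_sum_le_sum_abs _ _).trans (Finset.sum_le_sum fun j hj => ?_)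
    have hi1 : 1 ≤ i := (Finset.mem_Icc.mp hi).1
    set c : ℝ := ((-1 : ℝ) ^ (i + j) *
          (DD (V1 - V2) (V3 - V2) (j - 1) (i - 1) f V2
            - DD (V1 - V2) (V3 - V2) (j - 1) (i - 1) f V1)
        + (-1 : ℝ) ^ j *
          (DD (V1 - V3) (V2 - V3) (j - 1) (i - 1) f V3
            - DD (V1 - V3) (V2 - V3) (j - 1) (i - 1) f V1)) with hc
    set L : ℝ := lam2 V1 V2 V3 x with hL
    set S : ℝ := lam2 V1 V2 V3 x + lam3 V1 V2 V3 x with hS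
    rcases eq_or_ne S 0 with h0 | h0
    · rw [h0, Sber_zero]
      simp only [zero_div, mul_zero, abs_zero]
      positivity
    · have key : S ^ (i - 1) * Sber i (L / S) * Sber j S =
          Gfun (sPoly i) i L S * (q j).eval S := by
        rw [hq j S, Sber_eq, ← Gfun_eq (sPoly i) i (sPoly_deg i) L S h0]
        rw [show S ^ i = S ^ (i - 1) * S by
          rw [← pow_succ, Nat.sub_add_cancel hi1]]
        ring
      have h2 : c * (S ^ (i - 1) * Sber i (L / S) / (Nat.factorial i))
            * (Sber j S / (Nat.factorial j)) =
          c * (S ^ (i - 1) * Sber i (L / S) * Sber j S)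
            / ((Nat.factorial i : ℝ) * (Nat.factorial j : ℝ)) := by
        ring
      rw [h2, key, abs_div, abs_mul, abs_mul,
        abs_of_pos (show (0:ℝ) < (Nat.factorial i : ℝ) * (Nat.factorial j : ℝ) by positivity)]
  · simp [lam2_self, lam3_self, Sber_zero]
  · refine Finset.sum_eq_zero fun i hi => Finset.sum_eq_zero fun j hj => ?_
    have hi1 : 1 ≤ i := (Finset.mem_Icc.mp hi).1
    rw [lam2_self, lam3_self]
    rw [show (0:ℝ) + 0 = 0 by ring, Gfun_zero _ _ hi1]
    simp

lemma Pgen_tendsto (V1 V2 V3 : E2) (m : ℕ) (f : E2 → ℝ) :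
    Filter.Tendsto (Pgen V1 V2 V3 m f) (nhds V1) (nhds (f V1)) := by
  obtain ⟨A, Φ, hA, hΦ, hbd, hA1, hΦ1⟩ := Pgen_master V1 V2 V3 m f
  have h1 : Filter.Tendsto (fun x => Pgen V1 V2 V3 m f x - A x) (nhds V1) (nhds 0) := by
    have hΦt : Filter.Tendsto Φ (nhds V1) (nhds 0) := by
      rw [← hΦ1]; exact hΦ.continuousAt
    exact squeeze_zero_norm (fun x => by rw [Real.norm_eq_abs]; exact hbd x) hΦt
  have h2 : Filter.Tendsto A (nhds V1) (nhds (f V1)) := by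
    rw [← hA1]; exact hA.continuousAt
  have := h1.add h2
  simp only [zero_add] at this
  refine this.congr fun x => by ring

lemma Pgen_locBdd (V1 V2 V3 : E2) (m : ℕ) (f : E2 → ℝ) (x0 : E2) :
    ∃ M : ℝ, ∀ᶠ x in nhds x0, |Pgen V1 V2 V3 m f x| ≤ M := by
  obtain ⟨A, Φ, hA, hΦ, hbd, hA1, hΦ1⟩ := Pgen_master V1 V2 V3 m f
  refine ⟨Φ x0 + |A x0| + 1, ?_⟩
  have hc : Filter.Tendsto (fun x => Φ x + |A x|) (nhds x0) (nhds (Φ x0 + |A x0|)) :=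
    (hΦ.continuousAt.add hA.continuousAt.abs)
  filter_upwards [hc.eventually_lt_const (lt_add_one _)] with x hx
  calc |Pgen V1 V2 V3 m f x| ≤ |Pgen V1 V2 V3 m f x - A x| + |A x| := by
        have := abs_sub_abs_le_abs_sub (Pgen V1 V2 V3 m f x) (A x)
        have h := abs_add_le (Pgen V1 V2 V3 m f x - A x) (A x)
        calc |Pgen V1 V2 V3 m f x| = |(Pgen V1 V2 V3 m f x - A x) + A x| := by ring_nf
          _ ≤ _ := abs_add_le _ _
    _ ≤ Φ x + |A x| := by linarith [hbd x]
    _ ≤ Φ x0 + |A x0| + 1 := hx.le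

end Aux

/-- The Franke–Little/Renka local weight
`W_{μ,j}(x) = (max(1/‖x - V_j‖ - 1/R_{w_j}, 0))^μ`. -/
def Wloc (N : ℕ) (V : Fin N → E2) (R : Fin N → ℝ) (μ : ℝ) (j : Fin N) (x : E2) : ℝ :=
  (max (1 / ‖x - V j‖ - 1 / R j) 0) ^ μ

/-- The bivariate Shepard–Bernoulli operator
`S_{B_m}[f](x) = ∑ i W̃_{μ,i}(x) P_m^{Δ₂(i)}[f](x)`, where `Δ₂(i)` is the triangle
with vertices `V i, B i, C i`. -/
def SB (N : ℕ) (V B C : Fin N → E2) (R : Fin N → ℝ) (μ : ℝ) (m : ℕ)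
    (f : E2 → ℝ) (x : E2) : ℝ :=
  ∑ i, (Wloc N V R μ i x / ∑ j, Wloc N V R μ j x) * Pgen (V i) (B i) (C i) m f x

/-- **The Shepard–Bernoulli operator interpolates at every node:**
`S_{B_m}[f](x) → f(V_k)` as `x → V_k` through non-node points. -/
theorem SB_interpolates (N : ℕ) (D : Set E2) (hDc : IsCompact D) (hDconv : Convex ℝ D)
    (V : Fin N → E2) (hV : Function.Injective V) (hVD : ∀ i, V i ∈ D)
    (μ : ℝ) (hμ : 0 < μ) (R : Fin N → ℝ) (hR : ∀ j, 0 < R j)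
    (B C : Fin N → E2) (hnc : ∀ i, detA (V i) (B i) (C i) ≠ 0)
    (hTD : ∀ i, convexHull ℝ {V i, B i, C i} ⊆ D)
    (m : ℕ) (hm : 1 ≤ m)
    (U : Set E2) (hU : IsOpen U) (hDU : D ⊆ U)
    (f : E2 → ℝ) (hf : ContDiffOn ℝ m f U)
    (hden : ∀ k : Fin N, ∀ᶠ x in nhdsWithin (V k) {x | ∀ i, x ≠ V i},
      0 < ∑ j, Wloc N V R μ j x)
    (k : Fin N) :
    Filter.Tendsto (SB N V B C R μ m f)
      (nhdsWithin (V k) {x | ∀ i, x ≠ V i}) (nhds (f (V k))) := by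
  classical
  set F := nhdsWithin (V k) {x | ∀ i, x ≠ V i} with hF
  have hmemS : ∀ᶠ x in F, ∀ i, x ≠ V i := eventually_mem_nhdsWithin
  have hnorm : Filter.Tendsto (fun x => ‖x - V k‖) F (nhdsWithin 0 (Set.Ioi 0)) := by
    rw [tendsto_nhdsWithin_iff]
    constructor
    · have h : Filter.Tendsto (fun x : E2 => ‖x - V k‖) (nhds (V k)) (nhds 0) := by
        have := ((continuous_id.sub (continuous_const (y := V k))).norm).tendsto (V k)
        simpa using this
      exact h.mono_left nhdsWithin_le_nhds
    · filter_upwards [hmemS] with x hx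
      exact Set.mem_Ioi.mpr (norm_pos_iff.mpr (sub_ne_zero.mpr (hx k)))
  have hWk : Filter.Tendsto (fun x => Wloc N V R μ k x) F atTop := by
    have h1 : Filter.Tendsto (fun x => 1 / ‖x - V k‖) F atTop := by
      simpa [one_div, Function.comp_def] using tendsto_inv_nhdsGT_zero.comp hnorm
    have h2 : Filter.Tendsto (fun x => 1 / ‖x - V k‖ - 1 / R k) F atTop :=
      tendsto_atTop_add_const_right F _ h1
    have h3 : Filter.Tendsto (fun x => max (1 / ‖x - V k‖ - 1 / R k) 0) F atTop :=
      tendsto_atTop_mono (fun x => le_max_left _ _) h2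
    exact (tendsto_rpow_atTop hμ).comp h3
  have hWnn : ∀ (j : Fin N) (x : E2), 0 ≤ Wloc N V R μ j x := fun j x =>
    Real.rpow_nonneg (le_max_right _ _) _
  have hSnn : ∀ x : E2, 0 ≤ ∑ j, Wloc N V R μ j x := fun x =>
    Finset.sum_nonneg fun j _ => hWnn j x
  have hsum_ge : ∀ x : E2, Wloc N V R μ k x ≤ ∑ j, Wloc N V R μ j x := fun x =>
    Finset.single_le_sum (fun j _ => hWnn j x) (Finset.mem_univ k)
  have hSS : Filter.Tendsto (fun x => ∑ j, Wloc N V R μ j x) F atTop :=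
    tendsto_atTop_mono hsum_ge hWk
  have hSpos : ∀ᶠ x in F, 0 < ∑ j, Wloc N V R μ j x := hSS.eventually_gt_atTop 0
  have hwj : ∀ j : Fin N, j ≠ k →
      Filter.Tendsto (fun x => Wloc N V R μ j x / ∑ i, Wloc N V R μ i x) F (nhds 0) := by
    intro j hjk
    have hd : (0 : ℝ) < ‖V k - V j‖ := by
      rw [norm_pos_iff]
      exact sub_ne_zero.mpr fun h => hjk ((hV h).symm)
    set d : ℝ := ‖V k - V j‖ with hdd
    have hball : ∀ᶠ x in F, x ∈ Metric.ball (V k) (d / 2) := by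
      have h : ∀ᶠ x in nhds (V k), x ∈ Metric.ball (V k) (d / 2) :=
        Filter.eventually_of_mem (Metric.ball_mem_nhds _ (by positivity)) fun x hx => hx
      exact h.filter_mono nhdsWithin_le_nhds
    have hWjle : ∀ᶠ x in F, Wloc N V R μ j x ≤ (2 / d) ^ μ := by
      filter_upwards [hball] with x hx
      have h1 : ‖x - V k‖ < d / 2 := by
        simpa [Metric.mem_ball, dist_eq_norm] using hx
      have h2 : d ≤ ‖x - V k‖ + ‖x - V j‖ := by
        calc d = ‖(V k - x) + (x - V j)‖ := by rw [hdd, sub_add_sub_cancel]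
          _ ≤ ‖V k - x‖ + ‖x - V j‖ := norm_add_le _ _
          _ = ‖x - V k‖ + ‖x - V j‖ := by rw [norm_sub_rev]
      have hxj : d / 2 ≤ ‖x - V j‖ := by linarith
      have hxjpos : (0 : ℝ) < ‖x - V j‖ := by linarith
      have hb : max (1 / ‖x - V j‖ - 1 / R j) 0 ≤ 2 / d := by
        refine max_le ?_ (by positivity)
        have : 1 / ‖x - V j‖ ≤ 1 / (d / 2) := by
          apply one_div_le_one_div_of_le (by positivity) hxj
        have hRj : 0 < 1 / R j := by have := hR j; positivity
        have : 1 / ‖x - V j‖ ≤ 2 / d := by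
          rw [show (2 : ℝ) / d = 1 / (d / 2) by field_simp]
          exact this
        linarith
      exact Real.rpow_le_rpow (le_max_right _ _) hb hμ.le
    apply squeeze_zero'
    · filter_upwards with x
      exact div_nonneg (hWnn j x) (hSnn x)
    · filter_upwards [hWjle, hSpos] with x h1 h2
      exact (div_le_div_iff_of_pos_right h2).mpr h1
    · exact Filter.Tendsto.div_atTop tendsto_const_nhds hSS
  have hsplit : (fun x => Wloc N V R μ k x / ∑ i, Wloc N V R μ i x) =ᶠ[F]
      (fun x => 1 - ∑ j ∈ Finset.univ.erase k, Wloc N V R μ j x / ∑ i, Wloc N V R μ i x) := by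
    filter_upwards [hSpos] with x hx
    have hadd : Wloc N V R μ k x + ∑ j ∈ Finset.univ.erase k, Wloc N V R μ j x =
        ∑ i, Wloc N V R μ i x :=
      Finset.add_sum_erase _ (fun j => Wloc N V R μ j x) (Finset.mem_univ k)
    rw [eq_sub_iff_add_eq, ← Finset.sum_div, ← add_div, hadd, div_self hx.ne']
  have hwk : Filter.Tendsto (fun x => Wloc N V R μ k x / ∑ i, Wloc N V R μ i x)
      F (nhds 1) := by
    have hsum0 : Filter.Tendsto
        (fun x => ∑ j ∈ Finset.univ.erase k, Wloc N V R μ j x / ∑ i, Wloc N V R μ i x)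
        F (nhds 0) := by
      have := tendsto_finset_sum (Finset.univ.erase k)
        (fun j hj => hwj j (Finset.ne_of_mem_erase hj))
      simpa using this
    have h := (tendsto_const_nhds (x := (1 : ℝ)) (f := F)).sub hsum0
    rw [sub_zero] at h
    exact Filter.Tendsto.congr' hsplit.symm h
  have hsb : ∀ x : E2, SB N V B C R μ m f x =
      (Wloc N V R μ k x / ∑ i, Wloc N V R μ i x) * Pgen (V k) (B k) (C k) m f x +
      ∑ j ∈ Finset.univ.erase k,
        (Wloc N V R μ j x / ∑ i, Wloc N V R μ i x) * Pgen (V j) (B j) (C j) m f x :=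
    fun x => (Finset.add_sum_erase _
      (fun i => (Wloc N V R μ i x / ∑ i', Wloc N V R μ i' x) * Pgen (V i) (B i) (C i) m f x)
      (Finset.mem_univ k)).symm
  have h1 : Filter.Tendsto
      (fun x => (Wloc N V R μ k x / ∑ i, Wloc N V R μ i x) * Pgen (V k) (B k) (C k) m f x)
      F (nhds (1 * f (V k))) :=
    hwk.mul ((Pgen_tendsto (V k) (B k) (C k) m f).mono_left nhdsWithin_le_nhds)
  have h2 : Filter.Tendsto
      (fun x => ∑ j ∈ Finset.univ.erase k,
        (Wloc N V R μ j x / ∑ i, Wloc N V R μ i x) * Pgen (V j) (B j) (C j) m f x)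
      F (nhds 0) := by
    have h2' : Filter.Tendsto
        (fun x => ∑ j ∈ Finset.univ.erase k,
          (Wloc N V R μ j x / ∑ i, Wloc N V R μ i x) * Pgen (V j) (B j) (C j) m f x)
        F (nhds (∑ j ∈ Finset.univ.erase k, (0 : ℝ))) := by
      refine tendsto_finset_sum _ fun j hj => ?_
      obtain ⟨M, hM⟩ := Pgen_locBdd (V j) (B j) (C j) m f (V k)
      have hM' : ∀ᶠ x in F, |Pgen (V j) (B j) (C j) m f x| ≤ max M 0 :=
        (hM.filter_mono nhdsWithin_le_nhds).mono fun x hx => hx.trans (le_max_left _ _)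
      have hm0 : Filter.Tendsto
          (fun x => (Wloc N V R μ j x / ∑ i, Wloc N V R μ i x) * max M 0) F (nhds 0) := by
        have := (hwj j (Finset.ne_of_mem_erase hj)).mul_const (max M 0)
        simpa using this
      refine squeeze_zero_norm' ?_ hm0
      filter_upwards [hM'] with x hx
      rw [Real.norm_eq_abs, abs_mul,
        abs_of_nonneg (div_nonneg (hWnn j x) (hSnn x))]
      exact mul_le_mul_of_nonneg_left hx (div_nonneg (hWnn j x) (hSnn x))
    simpa using h2'
  have hfinal := h1.add h2
  rw [one_mul, add_zero] at hfinal
  exact Filter.Tendsto.congr (fun x => (hsb x).symm) hfinal
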